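/- Factoring out powers of a barycentric coordinate: if u is a polynomial of total degree ≤ k on ℝ^d whose normal derivatives ∂^t u / ∂n^t vanish on the hyperplane {λ = 0} for t = 0, 1, ..., t_0 with t_0 < k, where λ is a nonconstant affine function and n a unit vector not parallel to the hyperplane, then u = λ^{t_0+1} u_1 for some polynomial u_1 of total degree ≤ k − t_0 − 1. -/

import Mathlib

open MvPolynomial


lemma degree_one_single {σ : Type*} (m : σ →₀ ℕ) (h : (m.sum fun _ e => e) = 1) :
    ∃ i, m = Finsupp.single i 1 := by
  classical
  have hm : m ≠ 0 := by rintro rfl; simp at h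
  obtain ⟨i, hi⟩ := Finsupp.support_nonempty_iff.mpr hm
  have hi1 : 1 ≤ m i := Nat.one_le_iff_ne_zero.mpr (Finsupp.mem_support_iff.mp hi)
  have hsum : ∑ a ∈ m.support, m a = 1 := h
  have hle : m i ≤ 1 := hsum ▸ Finset.single_le_sum (fun a _ => Nat.zero_le _) hi
  have hmi : m i = 1 := le_antisymm hle hi1
  refine ⟨i, ?_⟩
  ext a
  rcases eq_or_ne a i with rfl | hne
  · simp [hmi]
  · simp only [Finsupp.single_apply, if_neg (Ne.symm hne)]
    by_contra hma
    have ha : a ∈ m.support := Finsupp.mem_support_iff.mpr hma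
    have hma1 : 1 ≤ m a := Nat.one_le_iff_ne_zero.mpr hma
    have hsub : ({i, a} : Finset σ) ⊆ m.support := by
      intro x hx; simp at hx; rcases hx with rfl | rfl <;> assumption
    have : 2 ≤ ∑ a ∈ m.support, m a :=
      calc 2 ≤ m i + m a := by omega
        _ = ∑ x ∈ ({i, a} : Finset σ), m x := by
              rw [Finset.sum_pair (Ne.symm hne)]
        _ ≤ ∑ a ∈ m.support, m a := Finset.sum_le_sum_of_subset hsub
    omega

lemma linear_form {d : ℕ} (lam : MvPolynomial (Fin d) ℝ) (h : lam.totalDegree ≤ 1) :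
    lam = C (coeff 0 lam) + ∑ i, C (coeff (Finsupp.single i 1) lam) * X i := by
  classical
  ext m
  have hXC : ∀ i : Fin d, (C (coeff (Finsupp.single i 1) lam) * X i : MvPolynomial (Fin d) ℝ)
      = monomial (Finsupp.single i 1) (coeff (Finsupp.single i 1) lam) := by
    intro i; rw [C_mul_X_eq_monomial]
  simp only [coeff_add, coeff_sum, hXC, coeff_monomial, MvPolynomial.coeff_C]
  rcases eq_or_ne m 0 with rfl | hm0
  · simp
  · rcases Nat.lt_or_ge (m.sum fun _ e => e) 2 with hlt | hge
    · interval_cases hh : (m.sum fun _ e => e)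
      · exfalso; apply hm0; ext a
        by_contra hma
        have : 1 ≤ m a := Nat.one_le_iff_ne_zero.mpr hma
        have := Finset.single_le_sum (fun a _ => Nat.zero_le (m a)) (Finsupp.mem_support_iff.mpr hma)
        simp only [Finsupp.sum] at hh
        omega
      · obtain ⟨i, rfl⟩ := degree_one_single m hh
        rw [if_neg hm0.symm, Finset.sum_eq_single i]
        · simp
        · intro b _ hbi
          rw [if_neg]
          intro hc
          exact hbi (by simpa using (Finsupp.single_left_injective one_ne_zero) hc.symm ▸ rfl)
        · simp
    · have hc0 : coeff m lam = 0 := by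
        apply coeff_eq_zero_of_totalDegree_lt
        calc lam.totalDegree ≤ 1 := h
          _ < m.sum fun _ e => e := hge
      rw [hc0, if_neg hm0.symm, Finset.sum_eq_zero]
      · simp
      intro i _
      rw [if_neg]
      intro hc
      rw [← hc] at hge
      simp [Finsupp.sum_single_index] at hge


lemma topComponent_ne_zero {σ R : Type*} [CommSemiring R] (p : MvPolynomial σ R) (hp : p ≠ 0) :
    homogeneousComponent p.totalDegree p ≠ 0 := by
  classical
  obtain ⟨m, hm, hdeg⟩ := p.support.exists_mem_eq_sup (Finset.nonempty_iff_ne_empty.mpr (mt MvPolynomial.support_eq_empty.mp hp))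
    (fun s => s.sum fun _ e => e)
  intro h0
  have : coeff m (homogeneousComponent p.totalDegree p) = coeff m p := by
    rw [coeff_homogeneousComponent, if_pos]
    rw [Finsupp.degree, totalDegree, hdeg]
    rfl
  rw [h0] at this
  exact Finsupp.mem_support_iff.mp hm this.symm

lemma homogeneousComponent_top_mul {σ R : Type*} [CommSemiring R] (p q : MvPolynomial σ R) :
    homogeneousComponent (p.totalDegree + q.totalDegree) (p * q) =
      homogeneousComponent p.totalDegree p * homogeneousComponent q.totalDegree q := by
  classical
  set a := p.totalDegree
  set b := q.totalDegree
  conv_lhs => rw [← p.sum_homogeneousComponent, ← q.sum_homogeneousComponent]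
  rw [Finset.sum_mul_sum, map_sum]
  rw [Finset.sum_eq_single a]
  · rw [map_sum, Finset.sum_eq_single b]
    · rw [homogeneousComponent_of_mem
        ((homogeneousComponent_isHomogeneous a p).mul (homogeneousComponent_isHomogeneous b q)), if_pos rfl]
    · intro j hj hjb
      rw [homogeneousComponent_of_mem
        ((homogeneousComponent_isHomogeneous a p).mul (homogeneousComponent_isHomogeneous j q)),
        if_neg (by omega)]
    · intro h; exact absurd (Finset.self_mem_range_succ b) h
  · intro i hi hia
    rw [map_sum, Finset.sum_eq_zero]
    intro j hj
    simp only [Finset.mem_range] at hi hj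
    rcases Nat.lt_or_ge (i + j) (a + b) with hlt | hge
    · exact homogeneousComponent_of_mem
        ((homogeneousComponent_isHomogeneous i p).mul (homogeneousComponent_isHomogeneous j q)) |>.trans
        (if_neg (by omega))
    · -- i ≤ a, j ≤ b, i+j ≥ a+b, i ≠ a impossible
      omega
  · intro h; exact absurd (Finset.self_mem_range_succ a) h

lemma totalDegree_mul_ge {σ : Type*} (p q : MvPolynomial σ ℝ) (hp : p ≠ 0) (hq : q ≠ 0) :
    p.totalDegree + q.totalDegree ≤ (p * q).totalDegree := by
  by_contra h
  push_neg at h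
  have h0 : homogeneousComponent (p.totalDegree + q.totalDegree) (p * q) = 0 :=
    homogeneousComponent_eq_zero _ (p * q) h
  rw [homogeneousComponent_top_mul] at h0
  rcases mul_eq_zero.mp h0 with h | h
  · exact topComponent_ne_zero p hp h
  · exact topComponent_ne_zero q hq h


lemma dvd_sub_bind {σ : Type*} [Fintype σ] (lam : MvPolynomial σ ℝ)
    (f : σ → MvPolynomial σ ℝ) (hf : ∀ i, lam ∣ (X i - f i)) (u : MvPolynomial σ ℝ) :
    lam ∣ (u - bind₁ f u) := by
  induction u using MvPolynomial.induction_on with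
  | C a => simp
  | add p q hp hq =>
      have : p + q - bind₁ f (p + q) = (p - bind₁ f p) + (q - bind₁ f q) := by
        rw [map_add]; ring
      rw [this]; exact dvd_add hp hq
  | mul_X p i hp =>
      have : p * X i - bind₁ f (p * X i)
          = (p - bind₁ f p) * X i + bind₁ f p * (X i - f i) := by
        rw [map_mul, bind₁_X_right]; ring
      rw [this]
      exact dvd_add (Dvd.dvd.mul_right hp _) (Dvd.dvd.mul_left (hf i) _)

lemma eval_bind₁' {σ : Type*} (y : σ → ℝ) (g : σ → MvPolynomial σ ℝ) (φ : MvPolynomial σ ℝ) :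
    eval y (bind₁ g φ) = eval (fun i => eval y (g i)) φ := by
  exact eval₂Hom_bind₁ (RingHom.id ℝ) y g φ


section
variable {d : ℕ}

lemma vanish_factor (lam : MvPolynomial (Fin d) ℝ) (hlam : lam.totalDegree = 1)
    (p : MvPolynomial (Fin d) ℝ) (hv : ∀ y, eval y lam = 0 → eval y p = 0) :
    ∃ q : MvPolynomial (Fin d) ℝ, q.totalDegree ≤ p.totalDegree - 1 ∧ p = lam * q := by
  classical
  set a : Fin d → ℝ := fun i => coeff (Finsupp.single i 1) lam with ha
  have hai : ∀ i, coeff (Finsupp.single i 1) lam = a i := fun i => rfl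
  have hlam0 : lam ≠ 0 := fun h => by simp [h] at hlam
  obtain ⟨m, hm, hdeg⟩ := lam.support.exists_mem_eq_sup
    (Finset.nonempty_iff_ne_empty.mpr (mt MvPolynomial.support_eq_empty.mp hlam0)) (fun s => s.sum fun _ e => e)
  have hm1 : (m.sum fun _ e => e) = 1 := by rw [← hdeg]; exact hlam
  obtain ⟨j, rfl⟩ := degree_one_single m hm1
  have haj : a j ≠ 0 := Finsupp.mem_support_iff.mp hm
  set f : Fin d → MvPolynomial (Fin d) ℝ :=
    Function.update X j (X j - C (a j)⁻¹ * lam) with hf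
  have hfj : f j = X j - C (a j)⁻¹ * lam := by rw [hf, Function.update_self]
  have hfi : ∀ i ≠ j, f i = X i := fun i hij => by rw [hf, Function.update_of_ne hij]
  have hXf : ∀ i, lam ∣ (X i - f i) := by
    intro i
    rcases eq_or_ne i j with rfl | hij
    · rw [hfj]; exact ⟨C (a i)⁻¹, by ring⟩
    · rw [hfi i hij]; simp
  have hlin : lam = C (coeff 0 lam) + ∑ i, C (a i) * X i := by
    simpa only [hai] using linear_form lam (le_of_eq hlam)
  have hsum : (∑ i, C (a i) * f i) = (∑ i, C (a i) * X i) - lam := by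
    have h1 : (∑ i, C (a i) * f i)
        = (∑ i, C (a i) * X i) + ∑ i, C (a i) * (f i - X i) := by
      rw [← Finset.sum_add_distrib]
      exact Finset.sum_congr rfl fun i _ => by ring
    have h2 : (∑ i, C (a i) * (f i - X i)) = C (a j) * (f j - X j) :=
      Finset.sum_eq_single j
        (fun i _ hij => by rw [hfi i hij]; ring)
        (fun h => absurd (Finset.mem_univ j) h)
    have h3 : C (a j) * (f j - X j) = -lam := by
      rw [hfj]
      have : C (a j) * (X j - C (a j)⁻¹ * lam - X j) = -((C (a j) * C (a j)⁻¹) * lam) := by ring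
      rw [this, ← C_mul, mul_inv_cancel₀ haj, C_1, one_mul]
    rw [h1, h2, h3]; ring
  have hblam : bind₁ f lam = 0 := by
    conv_lhs => rw [hlin]
    rw [map_add, map_sum, bind₁_C_right]
    simp only [map_mul, bind₁_C_right, bind₁_X_right]
    rw [hsum]
    linear_combination -hlin
  have hbp : bind₁ f p = 0 := by
    apply MvPolynomial.funext
    intro y
    rw [eval_bind₁', map_zero]
    apply hv
    rw [← eval_bind₁', hblam, map_zero]
  have hdvd : lam ∣ p := by
    have := dvd_sub_bind lam f hXf p
    rwa [hbp, sub_zero] at this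
  obtain ⟨q, hq⟩ := hdvd
  rcases eq_or_ne q 0 with rfl | hq0
  · exact ⟨0, by simp, hq⟩
  · refine ⟨q, ?_, hq⟩
    have := totalDegree_mul_ge lam q hlam0 hq0
    rw [← hq, hlam] at this
    omega

end


noncomputable def Dop {d : ℕ} (n : Fin d → ℝ) :
    MvPolynomial (Fin d) ℝ → MvPolynomial (Fin d) ℝ :=
  fun p => ∑ j, n j • pderiv j p

section
variable {d : ℕ} (n : Fin d → ℝ)

lemma Dop_mul (p q : MvPolynomial (Fin d) ℝ) :
    Dop n (p * q) = Dop n p * q + p * Dop n q := by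
  simp only [Dop, pderiv_mul, smul_add, Finset.sum_add_distrib, smul_mul_assoc,
    mul_smul_comm, Finset.sum_smul, Finset.mul_sum, Finset.sum_mul]

lemma Dop_pow (lam : MvPolynomial (Fin d) ℝ) (c : ℝ) (hclam : Dop n lam = C c) (t : ℕ) :
    Dop n (lam ^ (t + 1)) = (((t : ℝ) + 1) * c) • lam ^ t := by
  have h1 : ∀ j : Fin d, n j • pderiv j (lam ^ (t+1))
      = ((t+1 : ℕ) : MvPolynomial (Fin d) ℝ) * lam ^ t * (n j • pderiv j lam) := by
    intro j
    rw [pderiv_pow, Nat.add_sub_cancel, mul_smul_comm]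
  calc Dop n (lam ^ (t+1)) = ∑ j, n j • pderiv j (lam ^ (t+1)) := rfl
    _ = ∑ j, ((t+1 : ℕ) : MvPolynomial (Fin d) ℝ) * lam ^ t * (n j • pderiv j lam) :=
        Finset.sum_congr rfl fun j _ => h1 j
    _ = ((t+1 : ℕ) : MvPolynomial (Fin d) ℝ) * lam ^ t * Dop n lam := by
        rw [← Finset.mul_sum]; rfl
    _ = (((t : ℝ) + 1) * c) • lam ^ t := by
        have hcast : ((t+1 : ℕ) : MvPolynomial (Fin d) ℝ) = C ((t : ℝ) + 1) := by
          rw [← C_eq_coe_nat]; push_cast; ring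
        rw [hclam, smul_eq_C_mul, hcast, C_mul]
        ring

lemma Dop_pow_factor (lam : MvPolynomial (Fin d) ℝ) (c : ℝ) (hclam : Dop n lam = C c) :
    ∀ (t : ℕ) (v : MvPolynomial (Fin d) ℝ), ∃ w,
      (Dop n)^[t] (lam ^ t * v) = ((t.factorial : ℝ) * c ^ t) • v + lam * w := by
  intro t
  induction t with
  | zero => intro v; exact ⟨0, by simp⟩
  | succ t ih =>
    intro v
    have hD : Dop n (lam ^ (t+1) * v)
        = lam ^ t * ((((t : ℝ) + 1) * c) • v + lam * Dop n v) := by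
      rw [Dop_mul, Dop_pow n lam c hclam t]
      rw [smul_eq_C_mul, smul_eq_C_mul]
      ring
    obtain ⟨w, hw⟩ := ih ((((t : ℝ) + 1) * c) • v + lam * Dop n v)
    refine ⟨((t.factorial : ℝ) * c ^ t) • Dop n v + w, ?_⟩
    have hfac : (C (((t+1).factorial : ℝ) * c ^ (t+1)) : MvPolynomial (Fin d) ℝ)
        = C ((t.factorial : ℝ) * c ^ t) * C (((t : ℝ) + 1) * c) := by
      rw [← C_mul]; congr 1; push_cast [Nat.factorial_succ]; ring
    rw [Function.iterate_succ_apply, hD, hw]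
    simp only [smul_eq_C_mul]
    rw [hfac]
    ring
end

/-- Factoring out powers of a barycentric coordinate: if `u` is a polynomial of total degree
`≤ k` on `ℝ^d` whose directional derivatives `∂^t u / ∂n^t` vanish on the hyperplane
`{λ = 0}` for `t = 0, 1, ..., t₀` with `t₀ < k`, where `λ` is a nonconstant affine function
and `n` a unit vector with `Dλ(n) ≠ 0`, then `u = λ^(t₀+1) * u₁` for a polynomial `u₁` of
total degree `≤ k − t₀ − 1`. -/
theorem factor_out_powers (d k t₀ : ℕ) (lam u : MvPolynomial (Fin d) ℝ)
    (hlam : lam.totalDegree = 1)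
    (n : Fin d → ℝ) (hn : ∑ j, n j ^ 2 = 1)
    (hdual : (∑ j, n j • pderiv j lam) ≠ 0)
    (hu : u.totalDegree ≤ k) (ht₀ : t₀ < k)
    (hvan : ∀ t ≤ t₀, ∀ y : Fin d → ℝ, eval y lam = 0 →
      eval y ((fun p => ∑ j, n j • pderiv j p)^[t] u) = 0) :
    ∃ u₁ : MvPolynomial (Fin d) ℝ, u₁.totalDegree ≤ k - t₀ - 1 ∧
      u = lam ^ (t₀ + 1) * u₁ := by
  classical
  have hDop : (fun p : MvPolynomial (Fin d) ℝ => ∑ j, n j • pderiv j p) = Dop n := rfl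
  rw [hDop] at hvan
  -- partial derivatives of lam are constants
  have hpd : ∀ i, pderiv i lam = C (coeff (Finsupp.single i 1) lam) := by
    intro i
    conv_lhs => rw [linear_form lam (le_of_eq hlam)]
    rw [map_add, map_sum, pderiv_C, zero_add]
    rw [Finset.sum_eq_single i]
    · rw [pderiv_C_mul, pderiv_X_self, mul_one]
    · intro b _ hbi
      rw [pderiv_C_mul, pderiv_X_of_ne hbi, mul_zero]
    · intro h; exact absurd (Finset.mem_univ i) h
  set c : ℝ := ∑ j, n j * coeff (Finsupp.single j 1) lam with hc
  have hC : Dop n lam = C c := by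
    show (∑ j, n j • pderiv j lam) = C c
    rw [hc, map_sum]
    refine Finset.sum_congr rfl fun j _ => ?_
    rw [hpd j, smul_eq_C_mul, ← C_mul]
  have hc0 : c ≠ 0 := by
    intro h
    apply hdual
    have : Dop n lam = 0 := by rw [hC, h, C_0]
    exact this
  -- key induction
  have key : ∀ s, s ≤ t₀ + 1 → ∃ v : MvPolynomial (Fin d) ℝ,
      v.totalDegree ≤ k - s ∧ u = lam ^ s * v := by
    intro s
    induction s with
    | zero => intro _; exact ⟨u, by simpa using hu, by simp⟩
    | succ s ih =>
      intro hs
      obtain ⟨v, hvdeg, hveq⟩ := ih (by omega)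
      obtain ⟨w, hw⟩ := Dop_pow_factor n lam c hC s v
      have hvv : ∀ y, eval y lam = 0 → eval y v = 0 := by
        intro y hy
        have h1 := hvan s (by omega) y hy
        rw [hveq, hw] at h1
        simp only [smul_eq_C_mul, map_add, map_mul, eval_C, hy, zero_mul, add_zero] at h1
        have hne : ((s.factorial : ℝ) * c ^ s) ≠ 0 :=
          mul_ne_zero (Nat.cast_ne_zero.mpr (Nat.factorial_ne_zero s)) (pow_ne_zero s hc0)
        have h2 : ((s.factorial : ℝ) * c ^ s) * eval y v = 0 := by linear_combination h1
        exact (mul_eq_zero.mp h2).resolve_left hne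
      obtain ⟨q, hqdeg, hq⟩ := vanish_factor lam hlam v hvv
      refine ⟨q, by omega, ?_⟩
      rw [hveq, hq]
      ring
  obtain ⟨u₁, h1, h2⟩ := key (t₀ + 1) le_rfl
  exact ⟨u₁, by omega, h2⟩
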